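/- Assume k is even and tr(a) = 1. Then the graph G_k(a) is self-complementary: there is a graph isomorphism from G_k(a) to its complement. -/

import Mathlib

/-- The absolute trace `tr(x) = x + x² + x⁴ + ⋯ + x^{2^{k-1}}` of a finite field
of order `2^k`, taking values in the prime subfield `{0, 1} ⊆ F`. -/
def fieldTr {F : Type*} [Field F] (k : ℕ) (x : F) : F :=
  ∑ i ∈ Finset.range k, x ^ (2 ^ i)

/-- The defining relation of the graph `G_k(a)` on the vertex set `F ∪ {∞}`
(with `∞ = none`): distinct `x, y ∈ F` are related iff
`tr((xy + x + a)/(x + y)) = 0`, and `x ∈ F` is related to `∞` iff `tr(x) = 0`. -/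
def adjRel {F : Type*} [Field F] (k : ℕ) (a : F) : Option F → Option F → Prop
  | some x, some y => fieldTr k ((x * y + x + a) / (x + y)) = 0
  | some x, none   => fieldTr k x = 0
  | none,   some y => fieldTr k y = 0
  | none,   none   => False

/-- The graph `G_k(a)` on the vertex set `F ∪ {∞}`.  (When `tr(1) = 0`, the
relation `adjRel` is symmetric on distinct vertices, so `fromRel` produces
exactly the graph whose adjacency is given by `adjRel`.) -/
def Gka {F : Type*} [Field F] (k : ℕ) (a : F) : SimpleGraph (Option F) :=
  SimpleGraph.fromRel (adjRel k a)



section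
variable {F : Type*} [Field F] [CharP F 2]

lemma fieldTr_add (k : ℕ) (x y : F) :
    fieldTr k (x + y) = fieldTr k x + fieldTr k y := by
  unfold fieldTr
  rw [← Finset.sum_add_distrib]
  exact Finset.sum_congr rfl fun i _ => add_pow_char_pow x y 2 i

lemma fieldTr_one (k : ℕ) (hk : Even k) : fieldTr k (1 : F) = 0 := by
  unfold fieldTr
  simp only [one_pow, Finset.sum_const, Finset.card_range, nsmul_eq_mul, mul_one]
  obtain ⟨m, rfl⟩ := hk
  have h2 : (2 : F) = 0 := CharTwo.two_eq_zero
  push_cast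
  linear_combination (m : F) * h2

variable [Fintype F]

lemma fieldTr_sq (k : ℕ) (hcard : Fintype.card F = 2 ^ k) (x : F) :
    fieldTr k (x ^ 2) = fieldTr k x := by
  have key : ∀ i : ℕ, (x ^ 2) ^ (2 ^ i) = x ^ (2 ^ (i + 1)) := by
    intro i; rw [← pow_mul, pow_succ, mul_comm (2^i) 2, pow_mul]
  have h1 : fieldTr k (x ^ 2) + x = fieldTr k x + x ^ (2 ^ k) := by
    unfold fieldTr
    simp only [key]
    have e1 := Finset.sum_range_succ' (fun i => x ^ 2 ^ i) k
    have e2 := Finset.sum_range_succ (fun i => x ^ 2 ^ i) k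
    simp only [pow_zero, pow_one] at e1
    linear_combination e2 - e1
  have h2 : x ^ (2 ^ k) = x := by rw [← hcard]; exact FiniteField.pow_card x
  rw [h2] at h1
  exact add_right_cancel h1

lemma fieldTr_pow_two (k : ℕ) (hcard : Fintype.card F = 2 ^ k) (x : F) :
    (fieldTr k x) ^ 2 = fieldTr k x := by
  have h : (fieldTr k x) ^ 2 = fieldTr k (x ^ 2) := by
    unfold fieldTr
    rw [CharTwo.sum_sq]
    exact Finset.sum_congr rfl fun i _ => by rw [← pow_mul, mul_comm, pow_mul]
  rw [h, fieldTr_sq k hcard x]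

lemma fieldTr_zero_or_one (k : ℕ) (hcard : Fintype.card F = 2 ^ k) (x : F) :
    fieldTr k x = 0 ∨ fieldTr k x = 1 := by
  have := fieldTr_pow_two k hcard x
  have h : fieldTr k x * (fieldTr k x - 1) = 0 := by linear_combination this
  rcases mul_eq_zero.mp h with h | h
  · exact Or.inl h
  · exact Or.inr (by linear_combination h)

end

section
variable {F : Type*} [Field F] [CharP F 2] [Fintype F]

lemma tr_flip (k : ℕ) (hcard : Fintype.card F = 2 ^ k) (a : F) (ha : fieldTr k a = 1)
    {x y : F} (hxy : x ≠ y) :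
    fieldTr k (((x ^ 2 + a) * (y ^ 2 + a) + (x ^ 2 + a) + a) / ((x ^ 2 + a) + (y ^ 2 + a)))
      = fieldTr k ((x * y + x + a) / (x + y)) + 1 := by
  have h2 : (2 : F) = 0 := CharTwo.two_eq_zero
  have hs : x + y ≠ 0 := fun h => hxy (by linear_combination h - y * h2)
  have hden : (x ^ 2 + a) + (y ^ 2 + a) = (x + y) ^ 2 := by
    linear_combination (a - x * y) * h2
  have hnum : (x ^ 2 + a) * (y ^ 2 + a) + (x ^ 2 + a) + a
      = (x * y + x + a) ^ 2 + a * (x + y) ^ 2 := by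
    linear_combination (a - x ^ 2 * y - 2 * a * x * y - a * x) * h2
  rw [hden, hnum, add_div, mul_div_assoc, div_self (pow_ne_zero 2 hs), mul_one,
    ← div_pow, fieldTr_add, fieldTr_sq k hcard, ha]

lemma tr_symm (k : ℕ) (hk : Even k) (a : F) {x y : F} (hxy : x ≠ y) :
    fieldTr k ((y * x + y + a) / (y + x)) = fieldTr k ((x * y + x + a) / (x + y)) := by
  have h2 : (2 : F) = 0 := CharTwo.two_eq_zero
  have hs : x + y ≠ 0 := fun h => hxy (by linear_combination h - y * h2)
  have h : (y * x + y + a) / (y + x) = (x * y + x + a) / (x + y) + (x + y) / (x + y) := by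
    rw [← add_div, add_comm y x]
    congr 1
    linear_combination -x * h2
  rw [h, div_self hs, fieldTr_add, fieldTr_one k hk, add_zero]

end

theorem Gka_self_complementary
    {F : Type*} [Field F] [Fintype F] [CharP F 2] (k : ℕ) (hk : Even k)
    (hcard : Fintype.card F = 2 ^ k) (a : F) (ha : fieldTr k a = 1) :
    Nonempty (Gka k a ≃g (Gka k a)ᶜ) := by
  classical
  have h2 : (2 : F) = 0 := CharTwo.two_eq_zero
  have hinj : Function.Injective (fun x : F => x ^ 2 + a) := by
    intro x y h
    have hsq : x ^ 2 = y ^ 2 := by simpa using h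
    have h0 : (x + y) ^ 2 = 0 := by rw [CharTwo.add_sq, hsq, CharTwo.add_self_eq_zero]
    have h1 : x + y = 0 := by
      exact pow_eq_zero_iff (two_ne_zero) |>.mp h0
    linear_combination h1 - y * h2
  let eF : F ≃ F := Equiv.ofBijective _ (Finite.injective_iff_bijective.mp hinj)
  let e : Option F ≃ Option F := Equiv.optionCongr eF
  have he : ∀ x : F, e (some x) = some (x ^ 2 + a) := fun x => rfl
  have he0 : e none = none := rfl
  -- trace of x^2 + a flips by 1
  have htr : ∀ x : F, fieldTr k (x ^ 2 + a) = fieldTr k x + 1 := fun x => by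
    rw [fieldTr_add, fieldTr_sq k hcard, ha]
  have hflip : ∀ u v : Option F, u ≠ v → (adjRel k a (e u) (e v) ↔ ¬ adjRel k a u v) := by
    intro u v huv
    match u, v with
    | none, none => exact absurd rfl huv
    | some x, none =>
        rw [he, he0]
        show fieldTr k (x ^ 2 + a) = 0 ↔ ¬ (fieldTr k x = 0)
        rw [htr]
        rcases fieldTr_zero_or_one k hcard x with h | h <;>
          simp [h, CharTwo.add_self_eq_zero]
    | none, some y =>
        rw [he, he0]
        show fieldTr k (y ^ 2 + a) = 0 ↔ ¬ (fieldTr k y = 0)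
        rw [htr]
        rcases fieldTr_zero_or_one k hcard y with h | h <;>
          simp [h, CharTwo.add_self_eq_zero]
    | some x, some y =>
        have hxy : x ≠ y := fun h => huv (by rw [h])
        rw [he, he]
        show fieldTr k (((x ^ 2 + a) * (y ^ 2 + a) + (x ^ 2 + a) + a) /
              ((x ^ 2 + a) + (y ^ 2 + a))) = 0 ↔
            ¬ (fieldTr k ((x * y + x + a) / (x + y)) = 0)
        rw [tr_flip k hcard a ha hxy]
        rcases fieldTr_zero_or_one k hcard ((x * y + x + a) / (x + y)) with h | h <;>
          simp [h, CharTwo.add_self_eq_zero]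
  have hsymm : ∀ u v : Option F, u ≠ v → (adjRel k a v u ↔ adjRel k a u v) := by
    intro u v huv
    match u, v with
    | none, none => exact absurd rfl huv
    | some x, none => exact Iff.rfl
    | none, some y => exact Iff.rfl
    | some x, some y =>
        have hxy : x ≠ y := fun h => huv (by rw [h])
        show fieldTr k ((y * x + y + a) / (y + x)) = 0 ↔
            fieldTr k ((x * y + x + a) / (x + y)) = 0
        rw [tr_symm k hk a hxy]
  refine ⟨⟨e, ?_⟩⟩
  intro u v
  show (Gka k a)ᶜ.Adj (e u) (e v) ↔ (Gka k a).Adj u v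
  by_cases huv : u = v
  · subst huv
    simp [SimpleGraph.compl_adj]
  · have hne : e u ≠ e v := fun h => huv (e.injective h)
    rw [SimpleGraph.compl_adj]
    simp only [Gka, SimpleGraph.fromRel_adj]
    have hA : (adjRel k a (e u) (e v) ∨ adjRel k a (e v) (e u)) ↔ ¬ adjRel k a u v := by
      rw [hsymm (e u) (e v) hne, or_self, hflip u v huv]
    have hB : (adjRel k a u v ∨ adjRel k a v u) ↔ adjRel k a u v := by
      rw [hsymm u v huv, or_self]
    rw [hB]
    constructor
    · rintro ⟨_, hn⟩
      refine ⟨huv, ?_⟩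
      by_contra hc
      exact hn ⟨hne, hA.mpr hc⟩
    · rintro ⟨_, hadj⟩
      exact ⟨hne, fun ⟨_, h⟩ => (hA.mp h) hadj⟩
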